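/- Let G be a transitive permutation group on [n] and let f = p^G be a minterm-transitive function defined by a partial assignment p with support of size k ≥ 1. Then the 1-sensitivity of f satisfies s¹(f) ≥ k/2. -/

import Mathlib

/-- Flip the `i`-th bit of `x`. -/
def flipBit {n : ℕ} (x : Fin n → Bool) (i : Fin n) : Fin n → Bool :=
  fun j => if j = i then !x j else x j

/-- Flip all bits of `x` in the block `B`. -/
def flipSet {n : ℕ} (x : Fin n → Bool) (B : Finset (Fin n)) : Fin n → Bool :=
  fun j => if j ∈ B then !x j else x j

/-- Sensitivity of `f` at the input `x`. -/
def sensAt {n : ℕ} (f : (Fin n → Bool) → Bool) (x : Fin n → Bool) : ℕ :=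
  (Finset.univ.filter fun i => f (flipBit x i) ≠ f x).card

/-- Sensitivity of `f`. -/
def sens {n : ℕ} (f : (Fin n → Bool) → Bool) : ℕ :=
  Finset.univ.sup fun x => sensAt f x

/-- 0-sensitivity of `f`: max sensitivity over inputs where `f` is 0. -/
def sens0 {n : ℕ} (f : (Fin n → Bool) → Bool) : ℕ :=
  (Finset.univ.filter fun x => f x = false).sup fun x => sensAt f x

/-- 1-sensitivity of `f`: max sensitivity over inputs where `f` is 1. -/
def sens1 {n : ℕ} (f : (Fin n → Bool) → Bool) : ℕ :=
  (Finset.univ.filter fun x => f x = true).sup fun x => sensAt f x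

/-- Block sensitivity of `f` at `x`: the largest number of pairwise disjoint
nonempty blocks each of whose flips changes the value of `f` at `x`. -/
noncomputable def bsensAt {n : ℕ} (f : (Fin n → Bool) → Bool) (x : Fin n → Bool) : ℕ :=
  sSup {r : ℕ | ∃ B : Fin r → Finset (Fin n),
    (∀ j, (B j).Nonempty ∧ f (flipSet x (B j)) ≠ f x) ∧
    ∀ j j', j ≠ j' → Disjoint (B j) (B j')}

/-- Block sensitivity of `f`. -/
noncomputable def bsens {n : ℕ} (f : (Fin n → Bool) → Bool) : ℕ :=
  Finset.univ.sup fun x => bsensAt f x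

/-- A permutation group on `[n]` is transitive. -/
def IsTransitive {n : ℕ} (G : Subgroup (Equiv.Perm (Fin n))) : Prop :=
  ∀ i j : Fin n, ∃ π ∈ G, π i = j

open Classical in
/-- The minterm-transitive function `p^G` defined by the partial assignment
`p` with support `S`: it is 1 on `x` iff `x` extends some `G`-shift of `p`. -/
noncomputable def mintermFn {n : ℕ} (G : Subgroup (Equiv.Perm (Fin n)))
    (S : Finset (Fin n)) (p : Fin n → Bool) : (Fin n → Bool) → Bool :=
  fun x => decide (∃ π ∈ G, ∀ i ∈ S, x (π i) = p i)

/-- For a minterm-transitive function with pattern support size `k ≥ 1`,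
the 1-sensitivity is at least `k/2`. -/
lemma aux_sens1 {n : ℕ} (G : Subgroup (Equiv.Perm (Fin n)))
    (S : Finset (Fin n)) (p : Fin n → Bool) (b : Bool) :
    (S.filter fun i => p i = b).card ≤ sens1 (mintermFn G S p) := by
  classical
  set f := mintermFn G S p with hf
  set T : Finset (Fin n) := S.filter fun i => p i = b with hT
  set x : Fin n → Bool := fun j => if j ∈ S then p j else !b with hx
  have hfx : f x = true := by
    simp only [hf, mintermFn, decide_eq_true_eq]
    exact ⟨1, G.one_mem, fun i hi => by simp [hx, hi]⟩
  -- flipping any bit in T gives value false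
  have hflip : ∀ i ∈ T, f (flipBit x i) = false := by
    intro i hi
    rw [Finset.mem_filter] at hi
    obtain ⟨hiS, hpi⟩ := hi
    -- the set of coordinates equal to b in flipBit x i is T.erase i
    have hset : (Finset.univ.filter fun j => flipBit x i j = b) = T.erase i := by
      ext j
      simp only [Finset.mem_filter, Finset.mem_univ, true_and, Finset.mem_erase, hT]
      constructor
      · intro hj
        by_cases hji : j = i
        · exfalso
          subst hji
          simp [flipBit, hx, hiS, hpi] at hj
        · simp only [flipBit, if_neg hji, hx] at hj
          by_cases hjS : j ∈ S
          · simp only [if_pos hjS] at hj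
            exact ⟨hji, hjS, hj⟩
          · simp [if_neg hjS] at hj
      · rintro ⟨hji, hjS, hpj⟩
        simp [flipBit, hji, hx, hjS, hpj]
    by_contra hne
    have : f (flipBit x i) = true := by
      cases h : f (flipBit x i) with
      | false => exact absurd h hne
      | true => rfl
    simp only [hf, mintermFn, decide_eq_true_eq] at this
    obtain ⟨π, hπ, hcert⟩ := this
    -- π maps T injectively into the b-valued coordinates
    have hcard : T.card ≤ (Finset.univ.filter fun j => flipBit x i j = b).card := by
      apply Finset.card_le_card_of_injOn (fun j => π j)
      · intro j hj
        simp only [Finset.mem_coe, hT, Finset.mem_filter] at hj ⊢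
        exact ⟨Finset.mem_univ _, by rw [hcert j hj.1]; exact hj.2⟩
      · intro a _ c _ h
        exact π.injective h
    rw [hset, Finset.card_erase_of_mem (by simp [hT, hiS, hpi])] at hcard
    have hTpos : 1 ≤ T.card := Finset.card_pos.mpr ⟨i, by simp [hT, hiS, hpi]⟩
    omega
  -- sensitivity at x is at least |T|
  have hsens : T.card ≤ sensAt f x := by
    apply Finset.card_le_card
    intro i hi
    rw [Finset.mem_filter]
    exact ⟨Finset.mem_univ _, by rw [hflip i hi, hfx]; simp⟩
  refine hsens.trans ?_
  exact Finset.le_sup (by simp [hfx])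

theorem sens1_lower_bound {n k : ℕ} (G : Subgroup (Equiv.Perm (Fin n)))
    (hG : IsTransitive G) (S : Finset (Fin n)) (p : Fin n → Bool)
    (hk : S.card = k) (h1 : 1 ≤ k) :
    k ≤ 2 * sens1 (mintermFn G S p) := by
  classical
  have h1T := aux_sens1 G S p true
  have h0T := aux_sens1 G S p false
  have hsplit : (S.filter fun i => p i = true).card
      + (S.filter fun i => p i = false).card = k := by
    rw [← hk]
    have := Finset.card_filter_add_card_filter_not
      (s := S) (p := fun i => p i = true)
    simpa [Bool.not_eq_true] using this
  omega
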